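/- Define the 𝔽_2-bilinear form on 𝔽_4^n by B(x,y) = ⟨x²,y⟩ - ⟨x,y²⟩ where x² = (x_1²,...,x_n²) and ⟨·,·⟩ is the standard bilinear form on 𝔽_4^n. Then for any 𝔽_4-linear subspace C ⊆ 𝔽_4^n, the orthogonal complement of C with respect to B equals the orthogonal complement of C with respect to the hermitian form τ(x,y) = ⟨x²,y⟩. -/
import Mathlib


/-- The field with four elements. -/
abbrev F4 : Type := GaloisField 2 2

/-- The 𝔽₂-bilinear form `B(x,y) = ⟨x²,y⟩ - ⟨x,y²⟩` on `𝔽₄ⁿ`. -/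
noncomputable def traceForm {n : ℕ} (x y : Fin n → F4) : F4 :=
  (∑ i, (x i) ^ 2 * y i) - ∑ i, x i * (y i) ^ 2

/-- The standard hermitian form `τ(x,y) = ⟨x²,y⟩ = Σ xᵢ² yᵢ` on `𝔽₄ⁿ`. -/
noncomputable def hermForm {n : ℕ} (x y : Fin n → F4) : F4 :=
  ∑ i, (x i) ^ 2 * y i

instance : Fact (Nat.Prime 2) := ⟨Nat.prime_two⟩

noncomputable instance : Fintype F4 := Fintype.ofFinite F4

noncomputable instance : DecidableEq F4 := Classical.decEq _

lemma F4_card : Fintype.card F4 = 4 := by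
  have := GaloisField.card 2 2 (by norm_num)
  rw [Nat.card_eq_fintype_card] at this
  simpa using this

lemma F4_pow_four (x : F4) : x ^ 4 = x := by
  have := FiniteField.pow_card x
  rwa [F4_card] at this

lemma herm_sq {n : ℕ} (x y : Fin n → F4) : (hermForm x y) ^ 2 = hermForm y x := by
  unfold hermForm
  rw [sum_pow_char]
  refine Finset.sum_congr rfl fun i _ => ?_
  have h4 := F4_pow_four (x i)
  ring_nf
  linear_combination (y i)^2 * h4

lemma trace_eq {n : ℕ} (x y : Fin n → F4) :
    traceForm x y = hermForm x y - (hermForm x y) ^ 2 := by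
  rw [herm_sq]
  unfold traceForm hermForm
  congr 1
  refine Finset.sum_congr rfl fun i _ => ?_
  ring

lemma herm_smul {n : ℕ} (a : F4) (x y : Fin n → F4) :
    hermForm (a • x) y = a ^ 2 * hermForm x y := by
  unfold hermForm
  rw [Finset.mul_sum]
  refine Finset.sum_congr rfl fun i _ => ?_
  simp [mul_pow, mul_assoc]

lemma exists_nonfixed : ∃ a : F4, a ^ 2 ≠ a := by
  by_contra h
  push_neg at h
  have hsub : (Finset.univ : Finset F4) ⊆ {0, 1} := by
    intro a _
    have ha := h a
    have : a * (a - 1) = 0 := by linear_combination ha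
    rcases mul_eq_zero.mp this with h0 | h1
    · simp [h0]
    · simp [sub_eq_zero.mp h1]
  have hle := Finset.card_le_card hsub
  have h2 : ({0, 1} : Finset F4).card ≤ 2 :=
    (Finset.card_insert_le _ _).trans (by simp)
  rw [Finset.card_univ, F4_card] at hle
  omega

theorem orthogonal_traceForm_eq_orthogonal_hermForm (n : ℕ)
    (C : Submodule F4 (Fin n → F4)) :
    {y : Fin n → F4 | ∀ x ∈ C, traceForm x y = 0} =
      {y : Fin n → F4 | ∀ x ∈ C, hermForm x y = 0} := by
  ext y
  simp only [Set.mem_setOf_eq]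
  constructor
  · intro h x hx
    set t := hermForm x y with ht
    have ht1 : t - t ^ 2 = 0 := by
      have := h x hx
      rwa [trace_eq] at this
    obtain ⟨a, ha⟩ := exists_nonfixed
    have h4 := F4_pow_four a
    have hax : traceForm (a • x) y = 0 := h _ (C.smul_mem a hx)
    rw [trace_eq, herm_smul, ← ht] at hax
    have h2 : (a ^ 2 - a) * t = 0 := by
      linear_combination hax + t ^ 2 * h4 - a * ht1
    have hne : a ^ 2 - a ≠ 0 := sub_ne_zero.mpr ha
    exact (mul_eq_zero.mp h2).resolve_left hne
  · intro h x hx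
    rw [trace_eq, h x hx]
    ring
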